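/- Let M be a smooth closed manifold (compact, without boundary) and let f : M → ℝ be a smooth function with 0 ≤ f(x) ≤ 1 for all x ∈ M and such that every critical point x of f satisfies f(x) = 0 or f(x) = 1. Assume that the set f⁻¹(0) is nonempty and connected. Then for every a ∈ (0,1), the sublevel set {y ∈ M | f(y) ≤ a} is connected. -/

import Mathlib

open Manifold Set

/-- Descent lemma: at a non-critical point one can decrease `f` along a connected set. -/
lemma descend
    {E : Type*} [NormedAddCommGroup E] [NormedSpace ℝ E]
    {H : Type*} [TopologicalSpace H] (I : ModelWithCorners ℝ E H) [I.Boundaryless]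
    {M : Type*} [TopologicalSpace M] [ChartedSpace H M]
    (f : M → ℝ) {x : M}
    (hx : MDifferentiableAt I 𝓘(ℝ) f x)
    (hd : mfderiv I 𝓘(ℝ) f x ≠ 0) :
    ∃ K : Set M, IsConnected K ∧ x ∈ K ∧ (∀ y ∈ K, f y ≤ f x) ∧ ∃ y ∈ K, f y < f x := by
  set φ := extChartAt I x with hφ
  set p := φ x with hp
  have hL' : ∃ L : E →L[ℝ] ℝ, HasFDerivWithinAt (writtenInExtChartAt I 𝓘(ℝ) x f) L
      (Set.range I) p ∧ L ≠ 0 := by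
    refine ⟨mfderiv I 𝓘(ℝ) f x, hx.hasMFDerivAt.2, ?_⟩
    intro h0
    exact hd (by exact h0)
  obtain ⟨L, hLd, hLne⟩ := hL'
  obtain ⟨w, hw⟩ : ∃ w : E, L w ≠ 0 := by
    by_contra h
    push_neg at h
    exact hLne (ContinuousLinearMap.ext fun v => h v)
  set v : E := (-(L w)⁻¹) • w with hv
  have hLv : L v = -1 := by
    simp [hv, map_smul]
    field_simp
  have hfd : HasFDerivAt (writtenInExtChartAt I 𝓘(ℝ) x f) L p := by
    rwa [I.range_eq_univ, hasFDerivWithinAt_univ] at hLd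
  have hwrit : ∀ z : E, writtenInExtChartAt I 𝓘(ℝ) x f z = f (φ.symm z) := by
    intro z; simp [writtenInExtChartAt, hφ, chartAt_self_eq]
  set h : ℝ → ℝ := fun t => writtenInExtChartAt I 𝓘(ℝ) x f (p + t • v) with hh
  have hcurve : HasDerivAt (fun t : ℝ => p + t • v) v 0 := by
    simpa using ((hasDerivAt_id (0:ℝ)).smul_const v).const_add p
  have hfd' : HasFDerivAt (writtenInExtChartAt I 𝓘(ℝ) x f) L (p + (0:ℝ) • v) := by
    simpa using hfd
  have hderiv : HasDerivAt h (-1) 0 := by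
    have := hfd'.comp_hasDerivAt (x := (0:ℝ)) hcurve
    rw [hLv] at this; exact this
  have hslope : Filter.Tendsto (slope h 0) (nhdsWithin 0 {(0:ℝ)}ᶜ) (nhds (-1)) :=
    hasDerivAt_iff_tendsto_slope.1 hderiv
  have hev : ∀ᶠ t in nhdsWithin (0:ℝ) {(0:ℝ)}ᶜ, slope h 0 t < 0 :=
    hslope.eventually_lt_const (by norm_num)
  have hev' : ∀ᶠ t in nhds (0:ℝ), t ≠ 0 → slope h 0 t < 0 := by
    rw [eventually_nhdsWithin_iff] at hev
    exact hev.mono fun t ht h0 => ht h0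
  -- membership in the chart target
  have htgt : ∀ᶠ t in nhds (0:ℝ), p + t • v ∈ φ.target := by
    have hcont : Continuous fun t : ℝ => p + t • v := continuous_const.add (continuous_id.smul continuous_const)
    have hopen : IsOpen φ.target := isOpen_extChartAt_target x
    have hpmem : p ∈ φ.target := mem_extChartAt_target x
    have : (fun t : ℝ => p + t • v) ⁻¹' φ.target ∈ nhds (0:ℝ) := by
      apply hcont.continuousAt.preimage_mem_nhds
      simpa using hopen.mem_nhds hpmem
    exact this
  obtain ⟨ε, hε, hball⟩ := Metric.eventually_nhds_iff.1 (hev'.and htgt)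
  set t0 : ℝ := ε / 2 with ht0
  have ht0pos : 0 < t0 := by positivity
  have hkey : ∀ t ∈ Icc (0:ℝ) t0, p + t • v ∈ φ.target ∧ (t ≠ 0 → h t < h 0) := by
    intro t ht
    have : dist t 0 < ε := by
      rw [Real.dist_eq, sub_zero, abs_of_nonneg ht.1]
      linarith [ht.2]
    obtain ⟨hs, htg⟩ := hball this
    refine ⟨htg, fun h0 => ?_⟩
    have hsl := hs h0
    have htpos : 0 < t := lt_of_le_of_ne ht.1 (Ne.symm h0)
    rw [slope_def_field] at hsl
    have : (h t - h 0) / t < 0 := by simpa using hsl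
    have := (div_neg_iff.1 this)
    rcases this with ⟨h1, h2⟩ | ⟨h1, h2⟩
    · linarith
    · linarith
  set γ : ℝ → M := fun t => φ.symm (p + t • v) with hγ
  have hγ0 : γ 0 = x := by
    simp only [hγ, zero_smul, add_zero, hp]
    exact φ.left_inv (mem_extChartAt_source x)
  have hfγ : ∀ t, f (γ t) = h t := fun t => (hwrit _).symm
  have hcontγ : ContinuousOn γ (Icc 0 t0) := by
    apply (continuousOn_extChartAt_symm x).comp
    · exact (continuous_const.add (continuous_id.smul continuous_const)).continuousOn
    · intro t ht; exact (hkey t ht).1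
  refine ⟨γ '' Icc 0 t0, ⟨⟨γ 0, mem_image_of_mem γ ⟨le_refl _, ht0pos.le⟩⟩,
      (isPreconnected_Icc).image γ hcontγ⟩, ?_, ?_, ?_⟩
  · rw [← hγ0]
    exact mem_image_of_mem γ ⟨le_refl _, le_of_lt ht0pos⟩
  · rintro y ⟨t, ht, rfl⟩
    rw [hfγ, ← hγ0, hfγ]
    rcases eq_or_ne t 0 with rfl | h0
    · exact le_refl _
    · exact le_of_lt ((hkey t ht).2 h0)
  · refine ⟨γ t0, mem_image_of_mem γ ⟨le_of_lt ht0pos, le_refl _⟩, ?_⟩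
    rw [hfγ, ← hγ0, hfγ]
    exact (hkey t0 ⟨le_of_lt ht0pos, le_refl _⟩).2 (ne_of_gt ht0pos)

/-- For a Reeb function `f` on a smooth closed manifold whose set of minima `f⁻¹(0)` is
nonempty and connected, every sublevel set `{f ≤ a}` with `a ∈ (0,1)` is connected. -/
theorem stmt_7
    {E : Type*} [NormedAddCommGroup E] [NormedSpace ℝ E] [FiniteDimensional ℝ E]
    {H : Type*} [TopologicalSpace H] (I : ModelWithCorners ℝ E H) [I.Boundaryless]
    (M : Type*) [TopologicalSpace M] [ChartedSpace H M] [IsManifold I (⊤ : ℕ∞) M]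
    [T2Space M] [CompactSpace M]
    (f : M → ℝ)
    (hf : ContMDiff I 𝓘(ℝ) (⊤ : ℕ∞) f)
    (hrange : ∀ x, f x ∈ Set.Icc (0 : ℝ) 1)
    (hcrit : ∀ x, mfderiv I 𝓘(ℝ) f x = 0 → f x = 0 ∨ f x = 1)
    (hmin : IsConnected (f ⁻¹' {0})) :
    ∀ a ∈ Set.Ioo (0 : ℝ) 1, IsConnected {y : M | f y ≤ a} := by
  rintro a ⟨ha0, ha1⟩
  set A : Set M := {y : M | f y ≤ a} with hA
  have hfc : Continuous f := hf.continuous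
  have hAclosed : IsClosed A := isClosed_le hfc continuous_const
  have hSA : f ⁻¹' {0} ⊆ A := by
    intro y hy
    simp only [mem_preimage, mem_singleton_iff] at hy
    simp only [hA, mem_setOf_eq, hy]
    exact ha0.le
  -- every connected component of A contains a zero of f
  have key : ∀ y ∈ A, ∃ z ∈ connectedComponentIn A y, f z = 0 := by
    intro y hy
    set C := connectedComponentIn A y with hC
    have hyC : y ∈ C := mem_connectedComponentIn hy
    have hCA : C ⊆ A := connectedComponentIn_subset _ _
    have hCclosed : IsClosed C := by
      have h1 : closure C ⊆ A := hAclosed.closure_subset_iff.2 hCA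
      have h2 : closure C ⊆ C :=
        isPreconnected_connectedComponentIn.closure.subset_connectedComponentIn
          (subset_closure hyC) h1
      exact isClosed_of_closure_subset h2
    have hCcompact : IsCompact C := hCclosed.isCompact
    obtain ⟨x, hxC, hxmin⟩ := hCcompact.exists_isMinOn ⟨y, hyC⟩ hfc.continuousOn
    by_cases h0 : f x = 0
    · exact ⟨x, hxC, h0⟩
    exfalso
    have hxa : f x ≤ a := hCA hxC
    have hne : mfderiv I 𝓘(ℝ) f x ≠ 0 := by
      intro hz
      rcases hcrit x hz with h | h
      · exact h0 h
      · rw [h] at hxa; linarith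
    obtain ⟨K, hKconn, hxK, hKle, z, hzK, hz⟩ :=
      descend I f (hf.mdifferentiableAt (by simp)) hne
    have hKA : K ⊆ A := fun w hw => le_trans (hKle w hw) hxa
    have hKC : K ⊆ C := by
      have h1 : K ⊆ connectedComponentIn A x :=
        hKconn.isPreconnected.subset_connectedComponentIn hxK hKA
      rwa [← connectedComponentIn_eq hxC] at h1
    exact absurd (hxmin (hKC hzK)) (not_le.2 hz)
  obtain ⟨y0, hy0⟩ := hmin.nonempty
  refine ⟨⟨y0, hSA hy0⟩, isPreconnected_of_forall y0 ?_⟩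
  intro y hy
  obtain ⟨z, hzC, hz0⟩ := key y hy
  refine ⟨connectedComponentIn A y ∪ f ⁻¹' {0},
    union_subset (connectedComponentIn_subset _ _) hSA,
    Or.inr hy0, Or.inl (mem_connectedComponentIn hy), ?_⟩
  · exact isPreconnected_connectedComponentIn.union z hzC hz0 hmin.isPreconnected
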